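/- The KS-fermion Hamiltonian decomposes via the discrete exterior derivative: H_{KS;h} = -i(𝐝 - 𝐝*) = (-i𝐝) + (-i𝐝)* on ℓ²(2hℤ^d) ⊗ ℂ^Λ. -/

import Mathlib

noncomputable section

/-- The `j`-th standard basis vector of `ℤ^d`. -/
def e (d : ℕ) (j : Fin d) : Fin d → ℤ := Pi.single j 1

/-- `s_{j-1}(a)` for `a ∈ Λ = {0,1}^d`. -/
def sL (d : ℕ) (j : Fin d) (a : Fin d → Fin 2) : ℕ :=
  ∑ k ∈ Finset.univ.filter (fun k : Fin d => k < j), (a k : ℕ)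

/-- Forward difference `D^+_{2h;j}` on functions on `2hℤ^d` (indexed by `ℤ^d`). -/
def Dp2 (d : ℕ) (h : ℝ) (j : Fin d) (v : (Fin d → ℤ) → ℂ) : (Fin d → ℤ) → ℂ :=
  fun m => (1 / (2 * Complex.I * h)) * (v (m + e d j) - v m)

/-- Backward difference `D^-_{2h;j}` on functions on `2hℤ^d`. -/
def Dm2 (d : ℕ) (h : ℝ) (j : Fin d) (v : (Fin d → ℤ) → ℂ) : (Fin d → ℤ) → ℂ :=
  fun m => (1 / (2 * Complex.I * h)) * (v m - v (m - e d j))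

/-- The KS-fermion Hamiltonian on `ℓ²(2hℤ^d) ⊗ ℂ^Λ`. -/
def HKS (d : ℕ) (h : ℝ) (w : (Fin d → Fin 2) → (Fin d → ℤ) → ℂ) :
    (Fin d → Fin 2) → (Fin d → ℤ) → ℂ :=
  fun a m => ∑ j : Fin d,
    if a j = 1 then
      ((-1 : ℂ) ^ (sL d j a)) * Dp2 d h j (w (Function.update a j 0)) m
    else
      ((-1 : ℂ) ^ (sL d j a)) * Dm2 d h j (w (Function.update a j 1)) m

/-- The discrete exterior derivative `𝐝` on `ℓ²(2hℤ^d) ⊗ ℂ^Λ`. -/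
def Dop (d : ℕ) (h : ℝ) (w : (Fin d → Fin 2) → (Fin d → ℤ) → ℂ) :
    (Fin d → Fin 2) → (Fin d → ℤ) → ℂ :=
  fun a m => ∑ j : Fin d,
    if a j = 1 then
      ((-1 : ℂ) ^ (sL d j a)) * (Complex.I * Dp2 d h j (w (Function.update a j 0)) m)
    else 0

namespace Aux11
variable {d : ℕ}

lemma sub_e_ne (j : Fin d) (m : Fin d → ℤ) : m - e d j ≠ m := by
  intro hc
  have := congrFun hc j
  simp [e] at this

lemma sL_update (j : Fin d) (a : Fin d → Fin 2) (x : Fin 2) :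
    sL d j (Function.update a j x) = sL d j a := by
  unfold sL
  refine Finset.sum_congr rfl fun k hk => ?_
  rw [Function.update_of_ne (ne_of_lt (Finset.mem_filter.mp hk).2)]

lemma cond_iff (a b : Fin d → Fin 2) (j : Fin d) :
    (b j = 1 ∧ Function.update b j 0 = a) ↔ (a j = 0 ∧ b = Function.update a j 1) := by
  constructor
  · rintro ⟨h1, h2⟩
    refine ⟨by rw [← h2]; simp, ?_⟩
    rw [← h2]
    funext k
    rcases eq_or_ne k j with rfl | hk
    · simp [h1]
    · simp [Function.update_of_ne hk]
  · rintro ⟨h0, rfl⟩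
    refine ⟨by simp, ?_⟩
    funext k
    rcases eq_or_ne k j with rfl | hk
    · simp [h0]
    · simp [Function.update_of_ne hk]

def δf (d : ℕ) (a : Fin d → Fin 2) (m : Fin d → ℤ) :
    (Fin d → Fin 2) → (Fin d → ℤ) → ℂ :=
  fun b n => if b = a ∧ n = m then 1 else 0

lemma δf_memℓp (a : Fin d → Fin 2) (m : Fin d → ℤ) :
    Memℓp (fun p : (Fin d → Fin 2) × (Fin d → ℤ) => δf d a m p.1 p.2) 2 := by
  apply memℓp_gen
  apply summable_of_ne_finset_zero (s := {((a, m) : (Fin d → Fin 2) × (Fin d → ℤ))})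
  intro p hp
  have : δf d a m p.1 p.2 = 0 := by
    simp only [Finset.mem_singleton] at hp
    simp only [δf, ite_eq_right_iff, one_ne_zero]
    rintro ⟨h1, h2⟩
    exact hp (Prod.ext h1 h2)
  rw [this]
  simp [ENNReal.toReal_ofNat]

lemma Dop_delta (h : ℝ) (a : Fin d → Fin 2) (m : Fin d → ℤ) (b : Fin d → Fin 2)
    (n : Fin d → ℤ) :
    Dop d h (δf d a m) b n = ∑ j : Fin d,
      if a j = 0 ∧ b = Function.update a j 1 then
        ((-1 : ℂ) ^ (sL d j a)) * (Complex.I * ((1 / (2 * Complex.I * h)) *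
          ((if n = m - e d j then 1 else 0) - (if n = m then 1 else 0))))
      else 0 := by
  unfold Dop
  refine Finset.sum_congr rfl fun j _ => ?_
  by_cases h1 : b j = 1
  · by_cases h2 : Function.update b j 0 = a
    · obtain ⟨h0, hb⟩ := (cond_iff a b j).mp ⟨h1, h2⟩
      rw [if_pos h1, if_pos ⟨h0, hb⟩]
      have hs : sL d j b = sL d j a := by rw [hb, sL_update]
      rw [hs]
      congr 2
      unfold Dp2
      rw [h2]
      congr 1
      have e1 : δf d a m a (n + e d j) = (if n = m - e d j then 1 else 0) := by
        simp only [δf, true_and, eq_sub_iff_add_eq]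
      have e2 : δf d a m a n = (if n = m then 1 else 0) := by simp [δf]
      rw [e1, e2]
    · rw [if_pos h1, if_neg (fun hc => h2 ((cond_iff a b j).mpr hc).2)]
      have hz : ∀ n', δf d a m (Function.update b j 0) n' = 0 := by
        intro n'; simp [δf, h2]
      unfold Dp2
      rw [hz, hz]
      ring
  · rw [if_neg h1, if_neg ?_]
    rintro ⟨h0, hb⟩
    exact h1 (by rw [hb]; simp)

end Aux11

/-- `H_{KS;h} = -i(𝐝 - 𝐝*)`: for any operator `Ds` that is adjoint to `𝐝` with respect
to the `ℓ²(2hℤ^d) ⊗ ℂ^Λ` inner product `(2h)^d ∑_a ∑_m conj(·)·`, one has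
`H_{KS;h} w = -i (𝐝 w - Ds w)` for all `ℓ²` elements `w`. -/
theorem stmt11 (d : ℕ) (hd : 1 ≤ d) (h : ℝ) (hh : 0 < h)
    (Ds : ((Fin d → Fin 2) → (Fin d → ℤ) → ℂ) → ((Fin d → Fin 2) → (Fin d → ℤ) → ℂ))
    (hadj : ∀ w w' : (Fin d → Fin 2) → (Fin d → ℤ) → ℂ,
      Memℓp (fun p : (Fin d → Fin 2) × (Fin d → ℤ) => w p.1 p.2) 2 →
      Memℓp (fun p : (Fin d → Fin 2) × (Fin d → ℤ) => w' p.1 p.2) 2 →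
      (((2 * h) ^ d : ℝ) : ℂ) *
          ∑' a : Fin d → Fin 2, ∑' m : Fin d → ℤ, star (Dop d h w a m) * w' a m
        = (((2 * h) ^ d : ℝ) : ℂ) *
          ∑' a : Fin d → Fin 2, ∑' m : Fin d → ℤ, star (w a m) * Ds w' a m) :
    ∀ w : (Fin d → Fin 2) → (Fin d → ℤ) → ℂ,
      Memℓp (fun p : (Fin d → Fin 2) × (Fin d → ℤ) => w p.1 p.2) 2 →
      ∀ (a : Fin d → Fin 2) (m : Fin d → ℤ),
        HKS d h w a m = -Complex.I * (Dop d h w a m - Ds w a m) := by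
  classical
  intro w hw a m
  have hh0 : (h : ℂ) ≠ 0 := by
    exact_mod_cast hh.ne'
  have key := hadj (Aux11.δf d a m) w (Aux11.δf_memℓp a m) hw
  -- right-hand side of key
  have hR : (∑' b : Fin d → Fin 2, ∑' n : Fin d → ℤ,
      star (Aux11.δf d a m b n) * Ds w b n) = Ds w a m := by
    have h1 : ∀ b : Fin d → Fin 2, b ≠ a →
        (∑' n : Fin d → ℤ, star (Aux11.δf d a m b n) * Ds w b n) = 0 := by
      intro b hb
      have hz : ∀ n, star (Aux11.δf d a m b n) * Ds w b n = 0 := fun n => by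
        simp [Aux11.δf, hb]
      rw [tsum_congr hz, tsum_zero]
    rw [tsum_eq_single a h1]
    have h2 : ∀ n : Fin d → ℤ, n ≠ m → star (Aux11.δf d a m a n) * Ds w a n = 0 :=
      fun n hn => by simp [Aux11.δf, hn]
    rw [tsum_eq_single m h2]
    simp [Aux11.δf]
  -- left-hand side of key
  have hL : (∑' b : Fin d → Fin 2, ∑' n : Fin d → ℤ,
      star (Dop d h (Aux11.δf d a m) b n) * w b n)
      = ∑ j ∈ Finset.univ.filter (fun j : Fin d => a j = 0),
          ((-1 : ℂ) ^ (sL d j a)) * ((1 / (2 * (h : ℂ))) *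
            (w (Function.update a j 1) (m - e d j) - w (Function.update a j 1) m)) := by
    set S : Finset (Fin d → Fin 2) :=
      (Finset.univ.filter (fun j : Fin d => a j = 0)).image
        (fun j => Function.update a j 1) with hSdef
    have hout : ∀ b ∉ S,
        (∑' n : Fin d → ℤ, star (Dop d h (Aux11.δf d a m) b n) * w b n) = 0 := by
      intro b hb
      have hz : ∀ n, star (Dop d h (Aux11.δf d a m) b n) * w b n = 0 := by
        intro n
        have hDz : Dop d h (Aux11.δf d a m) b n = 0 := by
          rw [Aux11.Dop_delta]
          apply Finset.sum_eq_zero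
          intro j _
          rw [if_neg]
          rintro ⟨h0, hbj⟩
          exact hb (Finset.mem_image.mpr
            ⟨j, Finset.mem_filter.mpr ⟨Finset.mem_univ j, h0⟩, hbj.symm⟩)
        rw [hDz, star_zero, zero_mul]
      rw [tsum_congr hz, tsum_zero]
    rw [tsum_eq_sum hout, hSdef]
    rw [Finset.sum_image ?hinj]
    case hinj =>
      intro x hx y hy hxy
      by_contra hne
      have h1 : Function.update a x 1 x = 1 := by simp
      beta_reduce at hxy
      rw [hxy, Function.update_of_ne hne 1 a, (Finset.mem_filter.mp hx).2] at h1
      exact absurd h1 (by decide)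
    refine Finset.sum_congr rfl fun j hj => ?_
    have hj0 : a j = 0 := (Finset.mem_filter.mp hj).2
    have hDb : ∀ n : Fin d → ℤ, Dop d h (Aux11.δf d a m) (Function.update a j 1) n
        = ((-1 : ℂ) ^ (sL d j a)) * (Complex.I * ((1 / (2 * Complex.I * (h : ℂ))) *
            ((if n = m - e d j then 1 else 0) - (if n = m then 1 else 0)))) := by
      intro n
      rw [Aux11.Dop_delta]
      rw [Finset.sum_eq_single j]
      · rw [if_pos ⟨hj0, rfl⟩]
      · intro j' _ hj'
        rw [if_neg]
        rintro ⟨h0', hb'⟩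
        have h1 : Function.update a j 1 j = 1 := by simp
        rw [hb', Function.update_of_ne (Ne.symm hj') 1 a, hj0] at h1
        exact absurd h1 (by decide)
      · intro hj''; exact absurd (Finset.mem_univ j) hj''
    have hmne : m - e d j ≠ m := Aux11.sub_e_ne j m
    rw [tsum_eq_sum (s := ({m - e d j, m} : Finset (Fin d → ℤ)))
      (by
        intro n hn
        simp only [Finset.mem_insert, Finset.mem_singleton, not_or] at hn
        rw [hDb, if_neg hn.1, if_neg hn.2, sub_zero, mul_zero, mul_zero, mul_zero,
          star_zero, zero_mul])]
    rw [Finset.sum_insert (by simp [hmne]), Finset.sum_singleton]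
    rw [hDb, hDb, if_pos rfl, if_neg hmne, if_neg (Ne.symm hmne), if_pos rfl]
    have hIc : ∀ X : ℂ, Complex.I * ((1 / (2 * Complex.I * (h : ℂ))) * X)
        = (1 / (2 * (h : ℂ))) * X := by
      intro X
      have h2 : (1 / (2 * Complex.I * (h : ℂ)))
          = -Complex.I * (1 / (2 * (h : ℂ))) := by
        rw [div_eq_iff (by simp [hh0] : (2 * Complex.I * (h : ℂ)) ≠ 0)]
        have : -Complex.I * (1 / (2 * (h:ℂ))) * (2 * Complex.I * (h:ℂ))
            = (-Complex.I * Complex.I) * ((1 / (2 * (h:ℂ))) * (2 * (h:ℂ))) := by ring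
        rw [this, neg_mul, Complex.I_mul_I, neg_neg, one_mul,
          one_div, inv_mul_cancel₀ (by simp [hh0])]
      rw [h2]
      have : Complex.I * (-Complex.I * (1 / (2 * (h:ℂ))) * X)
          = (-(Complex.I * Complex.I)) * ((1 / (2 * (h:ℂ))) * X) := by ring
      rw [this, Complex.I_mul_I, neg_neg, one_mul]
    rw [hIc, hIc]
    have hstar : ∀ X : ℂ, star (((-1 : ℂ) ^ (sL d j a)) * ((1 / (2 * (h : ℂ))) * X))
        = ((-1 : ℂ) ^ (sL d j a)) * ((1 / (2 * (h : ℂ))) * star X) := by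
      intro X
      simp [star_mul', Complex.star_def, map_pow, map_ofNat, Complex.conj_ofReal]
    rw [hstar, hstar]
    have e1 : star ((1 : ℂ) - 0) = 1 := by simp
    have e2 : star ((0 : ℂ) - 1) = -1 := by simp
    rw [e1, e2]
    ring
  rw [hL, hR] at key
  have hne : (((2 * h) ^ d : ℝ) : ℂ) ≠ 0 :=
    Complex.ofReal_ne_zero.mpr (by positivity)
  have hDs : Ds w a m
      = ∑ j ∈ Finset.univ.filter (fun j : Fin d => a j = 0),
          ((-1 : ℂ) ^ (sL d j a)) * ((1 / (2 * (h : ℂ))) *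
            (w (Function.update a j 1) (m - e d j) - w (Function.update a j 1) m)) :=
    (mul_left_cancel₀ hne key).symm
  rw [hDs]
  unfold HKS Dop
  rw [Finset.sum_filter, ← Finset.sum_sub_distrib, Finset.mul_sum]
  refine Finset.sum_congr rfl fun j _ => ?_
  by_cases hj : a j = 1
  · rw [if_pos hj, if_pos hj, if_neg (by rw [hj]; decide), sub_zero]
    have : -Complex.I * (((-1 : ℂ) ^ (sL d j a)) *
        (Complex.I * Dp2 d h j (w (Function.update a j 0)) m))
        = (-Complex.I * Complex.I) * (((-1 : ℂ) ^ (sL d j a)) *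
          Dp2 d h j (w (Function.update a j 0)) m) := by ring
    rw [this, neg_mul, Complex.I_mul_I, neg_neg, one_mul]
  · have hj0 : a j = 0 := by omega
    rw [if_neg hj, if_neg hj, if_pos hj0, zero_sub]
    unfold Dm2
    have hcrw : (1 / (2 * Complex.I * (h : ℂ))) = -Complex.I * (1 / (2 * (h : ℂ))) := by
      rw [div_eq_iff (by simp [hh0] : (2 * Complex.I * (h : ℂ)) ≠ 0)]
      have : -Complex.I * (1 / (2 * (h:ℂ))) * (2 * Complex.I * (h:ℂ))
          = (-Complex.I * Complex.I) * ((1 / (2 * (h:ℂ))) * (2 * (h:ℂ))) := by ring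
      rw [this, neg_mul, Complex.I_mul_I, neg_neg, one_mul,
        one_div, inv_mul_cancel₀ (by simp [hh0])]
    rw [hcrw]
    ring
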